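/- Product factorization of the Ehrenfest Feynman–Kac semigroup (equation (12) of the paper, in matrix form): let N ≥ 1, λ > 0, α, β ∈ (0,1], h > 0, r_m ∈ ℝ, τ > 0. Let G be the (N+1)×(N+1) real matrix indexed by {0,…,N} with G_{k,k+1} = λα(N−k), G_{k,k−1} = λβ·k, G_{k,k} = −λα(N−k) − λβ·k − (h·k + r_m), and G_{k,j} = 0 otherwise. Let M be the 2×2 real matrix indexed by {0,1} with rows (−λα, λα) and (λβ, −λβ−h), and let u := exp(τ·M)·(1,1)ᵀ with components u_0, u_1. Then for every k ∈ {0,…,N}, the k-th component of exp(τ·G)·(1,…,1)ᵀ equals e^{−r_m·τ} · u_1^k · u_0^{N−k}. -/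

import Mathlib

open Matrix
open NormedSpace


lemma key_alg (N n : ℕ) (hn : n ≤ N) (hN : 1 ≤ N) (e u0 u1 la lb h rm : ℝ) :
    ((-rm * e) * u1 ^ n + e * ((n : ℝ) * u1 ^ (n - 1) * (lb * u0 + (-lb - h) * u1)))
        * u0 ^ (N - n)
      + (e * u1 ^ n) * (((N - n : ℕ) : ℝ) * u0 ^ (N - n - 1) * (-la * u0 + la * u1))
    = la * ((N : ℝ) - n) * (e * u1 ^ (n + 1) * u0 ^ (N - (n + 1)))
      + lb * n * (e * u1 ^ (n - 1) * u0 ^ (N - (n - 1)))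
      + (-(la * ((N : ℝ) - n)) - lb * n - (h * n + rm)) * (e * u1 ^ n * u0 ^ (N - n)) := by
  rcases Nat.eq_zero_or_pos n with h0 | h0
  · subst h0
    obtain ⟨q, rfl⟩ : ∃ q, N = q + 1 := ⟨N - 1, by omega⟩
    simp only [Nat.zero_sub, Nat.sub_zero, Nat.add_sub_cancel, pow_zero, Nat.cast_zero,
      Nat.cast_add, Nat.cast_one, pow_succ]
    ring
  · obtain ⟨m, rfl⟩ : ∃ m, n = m + 1 := ⟨n - 1, by omega⟩
    obtain ⟨p, rfl⟩ : ∃ p, N = m + 1 + p := ⟨N - (m + 1), by omega⟩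
    rcases Nat.eq_zero_or_pos p with hp | hp
    · subst hp
      simp only [Nat.add_zero, Nat.add_sub_cancel, Nat.sub_self,
        show m + 1 - (m + 1 + 1) = 0 from by omega,
        show m + 1 + 0 - (m + 1) = 0 from by omega,
        show m + 1 - m = 1 from by omega,
        Nat.cast_zero, pow_zero, pow_one, Nat.cast_add, Nat.cast_one, pow_succ]
      ring
    · obtain ⟨q, rfl⟩ : ∃ q, p = q + 1 := ⟨p - 1, by omega⟩
      simp only [Nat.add_sub_cancel,
        show m + 1 + (q + 1) - (m + 1) = q + 1 from by omega,
        show m + 1 + (q + 1) - (m + 1) - 1 = q from by omega,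
        show m + 1 + (q + 1) - (m + 1 + 1) = q from by omega,
        show m + 1 + (q + 1) - m = q + 2 from by omega,
        Nat.cast_add, Nat.cast_one, pow_succ]
      push_cast
      ring

lemma tridiag_mulVec (N : ℕ) (a b d : ℕ → ℝ)
    (G : Matrix (Fin (N + 1)) (Fin (N + 1)) ℝ)
    (hG : ∀ k j : Fin (N + 1),
      G k j = if (j : ℕ) = (k : ℕ) + 1 then a k
        else if (j : ℕ) + 1 = (k : ℕ) then b k
        else if k = j then d k else 0)
    (ha : a N = 0) (hb : b 0 = 0) (v : ℕ → ℝ) (k : Fin (N + 1)) :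
    G.mulVec (fun j => v (j : ℕ)) k
      = a k * v ((k : ℕ) + 1) + b k * v ((k : ℕ) - 1) + d k * v k := by
  have expand : ∀ j : Fin (N + 1), G k j * v (j : ℕ)
      = (if (j : ℕ) = (k : ℕ) + 1 then a k * v (j : ℕ) else 0)
        + (if (j : ℕ) + 1 = (k : ℕ) then b k * v (j : ℕ) else 0)
        + (if k = j then d k * v (j : ℕ) else 0) := by
    intro j
    rw [hG]
    rcases eq_or_ne ((j : ℕ)) ((k : ℕ) + 1) with h1 | h1 <;>
      rcases eq_or_ne ((j : ℕ) + 1) ((k : ℕ)) with h2 | h2 <;>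
      rcases eq_or_ne k j with h3 | h3 <;>
      simp_all [Fin.ext_iff] <;> omega
  simp only [Matrix.mulVec, dotProduct]
  rw [Finset.sum_congr rfl (fun j _ => expand j), Finset.sum_add_distrib,
    Finset.sum_add_distrib]
  have s3 : (∑ j : Fin (N + 1), if k = j then d (k : ℕ) * v (j : ℕ) else 0)
      = d (k : ℕ) * v (k : ℕ) := by
    rw [Finset.sum_ite_eq]; simp
  have s1 : (∑ j : Fin (N + 1), if (j : ℕ) = (k : ℕ) + 1 then a (k : ℕ) * v (j : ℕ) else 0)
      = a (k : ℕ) * v ((k : ℕ) + 1) := by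
    rcases eq_or_ne ((k : ℕ)) N with hk | hk
    · rw [Finset.sum_eq_zero, hk, ha, zero_mul]
      intro j _
      rw [if_neg]
      omega
    · have hlt : (k : ℕ) + 1 < N + 1 := by omega
      rw [Finset.sum_eq_single (⟨(k : ℕ) + 1, hlt⟩ : Fin (N + 1))]
      · rw [if_pos rfl]
      · intro j _ hj
        exact if_neg fun hc => hj (by apply Fin.ext; simpa using hc)
      · exact fun hmem => absurd (Finset.mem_univ _) hmem
  have s2 : (∑ j : Fin (N + 1), if (j : ℕ) + 1 = (k : ℕ) then b (k : ℕ) * v (j : ℕ) else 0)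
      = b (k : ℕ) * v ((k : ℕ) - 1) := by
    rcases eq_or_ne ((k : ℕ)) 0 with hk | hk
    · rw [Finset.sum_eq_zero, hk, hb, zero_mul]
      intro j _
      rw [if_neg]
      omega
    · have hlt : (k : ℕ) - 1 < N + 1 := by omega
      rw [Finset.sum_eq_single (⟨(k : ℕ) - 1, hlt⟩ : Fin (N + 1))]
      · rw [if_pos (by simp; omega)]
      · intro j _ hj
        exact if_neg fun hc => hj (by apply Fin.ext; simp; omega)
      · exact fun hmem => absurd (Finset.mem_univ _) hmem
  rw [s1, s2, s3]
open Matrix NormedSpace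

attribute [local instance] Matrix.linftyOpNormedRing Matrix.linftyOpNormedAlgebra

noncomputable def entryCLM (n : ℕ) (i j : Fin n) : Matrix (Fin n) (Fin n) ℝ →L[ℝ] ℝ :=
  LinearMap.toContinuousLinearMap (Matrix.entryLinearMap ℝ ℝ i j)

lemma hasDerivAt_entry {n : ℕ} {f : ℝ → Matrix (Fin n) (Fin n) ℝ}
    {f' : Matrix (Fin n) (Fin n) ℝ} {t : ℝ} (hf : HasDerivAt f f' t) (i j : Fin n) :
    HasDerivAt (fun s => f s i j) (f' i j) t :=
  ((entryCLM n i j).hasFDerivAt.comp_hasDerivAt t hf :)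

noncomputable def Uaux (Mm : Matrix (Fin 2) (Fin 2) ℝ) (t : ℝ) : Fin 2 → ℝ :=
  (exp (t • Mm)).mulVec (fun _ => 1)

noncomputable def Faux (N : ℕ) (rm : ℝ) (Mm : Matrix (Fin 2) (Fin 2) ℝ) (t : ℝ)
    (j : Fin (N + 1)) : ℝ :=
  Real.exp (-(rm * t)) * (Uaux Mm t 1) ^ (j : ℕ) * (Uaux Mm t 0) ^ (N - (j : ℕ))

lemma hasDerivAt_exp_entry (n : ℕ) (A : Matrix (Fin n) (Fin n) ℝ) (t : ℝ) (i j : Fin n) :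
    HasDerivAt (fun s => exp (s • A) i j) ((A * exp (t • A)) i j) t :=
  hasDerivAt_entry (hasDerivAt_exp_smul_const' A t) i j

lemma hasDerivAt_Uaux (Mm : Matrix (Fin 2) (Fin 2) ℝ) (t : ℝ) (i : Fin 2) :
    HasDerivAt (fun s => Uaux Mm s i) ((Mm.mulVec (Uaux Mm t)) i) t := by
  have key : HasDerivAt (fun s => ∑ j, exp (s • Mm) i j * 1)
      (∑ j, (Mm * exp (t • Mm)) i j * 1) t :=
    HasDerivAt.fun_sum fun j _ => (hasDerivAt_exp_entry 2 Mm t i j).mul_const 1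
  have h2 : (∑ j, (Mm * exp (t • Mm)) i j * 1) = (Mm.mulVec (Uaux Mm t)) i := by
    simp only [Uaux, ← Matrix.mulVec_mulVec]
    simp [Matrix.mulVec, dotProduct, Matrix.mul_apply, Fin.sum_univ_two]
    ring
  rw [h2] at key
  exact key

example : True := trivial

section Main

variable (N : ℕ) (lam α β h rm : ℝ)

local notation "Mm" => (!![-(lam * α), lam * α; lam * β, -(lam * β) - h] :
  Matrix (Fin 2) (Fin 2) ℝ)

lemma hasDerivAt_U0 (t : ℝ) :
    HasDerivAt (fun s => Uaux Mm s 0)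
      (-(lam * α) * Uaux Mm t 0 + lam * α * Uaux Mm t 1) t := by
  have := hasDerivAt_Uaux Mm t 0
  simpa [Matrix.mulVec, dotProduct, Fin.sum_univ_two] using this

lemma hasDerivAt_U1 (t : ℝ) :
    HasDerivAt (fun s => Uaux Mm s 1)
      (lam * β * Uaux Mm t 0 + (-(lam * β) - h) * Uaux Mm t 1) t := by
  have := hasDerivAt_Uaux Mm t 1
  simpa [Matrix.mulVec, dotProduct, Fin.sum_univ_two] using this

lemma hasDerivAt_Faux (hN : 1 ≤ N)
    (G : Matrix (Fin (N + 1)) (Fin (N + 1)) ℝ)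
    (hG : ∀ k j : Fin (N + 1),
      G k j =
        if (j : ℕ) = (k : ℕ) + 1 then lam * α * ((N : ℝ) - (k : ℕ))
        else if (j : ℕ) + 1 = (k : ℕ) then lam * β * (k : ℕ)
        else if k = j then
          -(lam * α * ((N : ℝ) - (k : ℕ))) - lam * β * (k : ℕ) - (h * (k : ℕ) + rm)
        else 0)
    (t : ℝ) (j : Fin (N + 1)) :
    HasDerivAt (fun s => Faux N rm Mm s j) (G.mulVec (Faux N rm Mm t) j) t := by
  have hexp : HasDerivAt (fun s => Real.exp (-(rm * s))) (-rm * Real.exp (-(rm * t))) t := by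
    have h1 : HasDerivAt (fun s : ℝ => -(rm * s)) (-rm) t := by
      simpa [neg_mul] using (hasDerivAt_id t).const_mul (-rm)
    simpa [mul_comm] using h1.exp
  have H := (hexp.mul ((hasDerivAt_U1 lam α β h t).pow (j : ℕ))).mul
    ((hasDerivAt_U0 lam α β h t).pow (N - (j : ℕ)))
  have ht := tridiag_mulVec N (fun n => lam * α * ((N : ℝ) - n)) (fun n => lam * β * n)
    (fun n => -(lam * α * ((N : ℝ) - n)) - lam * β * n - (h * n + rm)) G hG
    (by push_cast; ring) (by norm_num)
    (fun m => Real.exp (-(rm * t)) * (Uaux Mm t 1) ^ m * (Uaux Mm t 0) ^ (N - m)) j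
  have hk := key_alg N (j : ℕ) (Nat.lt_succ_iff.mp j.isLt) hN (Real.exp (-(rm * t)))
    (Uaux Mm t 0) (Uaux Mm t 1) (lam * α) (lam * β) h rm
  have hval : G.mulVec (Faux N rm Mm t) j
      = ((-rm * Real.exp (-(rm * t))) * (Uaux Mm t 1) ^ (j : ℕ)
          + Real.exp (-(rm * t)) * (((j : ℕ) : ℝ) * (Uaux Mm t 1) ^ ((j : ℕ) - 1)
            * (lam * β * Uaux Mm t 0 + (-(lam * β) - h) * Uaux Mm t 1)))
          * (Uaux Mm t 0) ^ (N - (j : ℕ))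
        + (Real.exp (-(rm * t)) * (Uaux Mm t 1) ^ (j : ℕ))
          * (((N - (j : ℕ) : ℕ) : ℝ) * (Uaux Mm t 0) ^ (N - (j : ℕ) - 1)
            * (-(lam * α) * Uaux Mm t 0 + lam * α * Uaux Mm t 1)) := by
    exact ht.trans hk.symm
  rw [hval]
  exact H

lemma psi_hasDerivAt (hN : 1 ≤ N) (τ : ℝ)
    (G : Matrix (Fin (N + 1)) (Fin (N + 1)) ℝ)
    (hG : ∀ k j : Fin (N + 1),
      G k j =
        if (j : ℕ) = (k : ℕ) + 1 then lam * α * ((N : ℝ) - (k : ℕ))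
        else if (j : ℕ) + 1 = (k : ℕ) then lam * β * (k : ℕ)
        else if k = j then
          -(lam * α * ((N : ℝ) - (k : ℕ))) - lam * β * (k : ℕ) - (h * (k : ℕ) + rm)
        else 0)
    (k : Fin (N + 1)) (t : ℝ) :
    HasDerivAt (fun s => (exp ((τ - s) • G)).mulVec (Faux N rm Mm s) k) 0 t := by
  have hEd : ∀ i j : Fin (N + 1), HasDerivAt (fun s => exp ((τ - s) • G) i j)
      ((G * exp ((τ - t) • G)) i j * (-1)) t := by
    intro i j
    have outer := hasDerivAt_exp_entry (N + 1) G (τ - t) i j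
    have inner : HasDerivAt (fun s : ℝ => τ - s) (-1) t := by
      simpa using (hasDerivAt_id t).const_sub τ
    simpa [Function.comp_def] using outer.comp t inner
  have key : HasDerivAt (fun s => ∑ j, exp ((τ - s) • G) k j * Faux N rm Mm s j)
      (∑ j, ((G * exp ((τ - t) • G)) k j * (-1) * Faux N rm Mm t j
        + exp ((τ - t) • G) k j * (G.mulVec (Faux N rm Mm t)) j)) t :=
    HasDerivAt.fun_sum fun j _ =>
      (hEd k j).mul (hasDerivAt_Faux N lam α β h rm hN G hG t j)
  have hcomm : G * exp ((τ - t) • G) = exp ((τ - t) • G) * G :=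
    (((Commute.refl G).smul_right (τ - t)).exp_right)
  have hval : (∑ j, ((G * exp ((τ - t) • G)) k j * (-1) * Faux N rm Mm t j
      + exp ((τ - t) • G) k j * (G.mulVec (Faux N rm Mm t)) j)) = 0 := by
    rw [Finset.sum_add_distrib]
    have h1 : (∑ j, exp ((τ - t) • G) k j * (G.mulVec (Faux N rm Mm t)) j)
        = ((G * exp ((τ - t) • G)).mulVec (Faux N rm Mm t)) k := by
      rw [hcomm, ← Matrix.mulVec_mulVec]
      rfl
    have h2 : (∑ j, (G * exp ((τ - t) • G)) k j * (-1) * Faux N rm Mm t j)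
        = -(((G * exp ((τ - t) • G)).mulVec (Faux N rm Mm t)) k) := by
      simp only [Matrix.mulVec, dotProduct, ← Finset.sum_neg_distrib]
      exact Finset.sum_congr rfl fun j _ => by ring
    rw [h1, h2, neg_add_cancel]
  rw [hval] at key
  exact key

end Main


/-- Product factorization of the Ehrenfest Feynman–Kac semigroup: the zero-coupon bond
price factorizes into powers of the two-state bond factors. -/
theorem ehrenfest_feynman_kac_factorization (N : ℕ) (hN : 1 ≤ N)
    (lam α β h rm τ : ℝ) (hlam : 0 < lam)
    (hα : α ∈ Set.Ioc (0 : ℝ) 1) (hβ : β ∈ Set.Ioc (0 : ℝ) 1)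
    (hh : 0 < h) (hτ : 0 < τ)
    (G : Matrix (Fin (N + 1)) (Fin (N + 1)) ℝ)
    (hG : ∀ k j : Fin (N + 1),
      G k j =
        if (j : ℕ) = (k : ℕ) + 1 then lam * α * ((N : ℝ) - (k : ℕ))
        else if (j : ℕ) + 1 = (k : ℕ) then lam * β * (k : ℕ)
        else if k = j then
          -(lam * α * ((N : ℝ) - (k : ℕ))) - lam * β * (k : ℕ) - (h * (k : ℕ) + rm)
        else 0)
    (u : Fin 2 → ℝ)
    (hu : u = (NormedSpace.exp
        (τ • (!![-(lam * α), lam * α; lam * β, -(lam * β) - h] :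
          Matrix (Fin 2) (Fin 2) ℝ))).mulVec (fun _ => 1))
    (k : Fin (N + 1)) :
    (NormedSpace.exp (τ • G)).mulVec (fun _ => 1) k =
      Real.exp (-(rm * τ)) * (u 1) ^ (k : ℕ) * (u 0) ^ (N - (k : ℕ)) := by
  set Mm : Matrix (Fin 2) (Fin 2) ℝ := !![-(lam * α), lam * α; lam * β, -(lam * β) - h]
    with hMm
  have hconst := is_const_of_deriv_eq_zero
    (f := fun s => (exp ((τ - s) • G)).mulVec (Faux N rm Mm s) k)
    (fun t => (psi_hasDerivAt N lam α β h rm hN τ G hG k t).differentiableAt)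
    (fun t => (psi_hasDerivAt N lam α β h rm hN τ G hG k t).deriv) τ 0
  have hL : (exp ((τ - τ) • G)).mulVec (Faux N rm Mm τ) k = Faux N rm Mm τ k := by
    simp [NormedSpace.exp_zero]
  have hF0 : Faux N rm Mm 0 = fun _ => (1 : ℝ) := by
    funext j
    simp [Faux, Uaux, NormedSpace.exp_zero, Matrix.one_mulVec]
  have hR : (exp ((τ - 0) • G)).mulVec (Faux N rm Mm 0) k
      = (exp (τ • G)).mulVec (fun _ => 1) k := by
    rw [hF0]
    norm_num
  simp only [hL, hR] at hconst
  rw [← hconst, hu]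
  simp [Faux, Uaux]
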